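/- For every ℓ ∈ ℝ and every m > 0 there exists θ₀ > 0 such that for every 0 < θ ≤ θ₀ the function r_{ℓ,θ}(x) := (1 + θ‖x‖²)^{−ℓ} on ℝ² satisfies, for all x ∈ ℝ², the inequality | r_{ℓ,θ}(x)·Δr_{ℓ,θ}(x) − 2‖∇r_{ℓ,θ}(x)‖² | < 2 m² · r_{ℓ,θ}(x)², where Δ is the Laplacian on ℝ², ∇ the gradient, and ‖·‖ the Euclidean norm. -/

import Mathlib

/-- The Laplacian on `ℝ²`: the sum of the second partial derivatives. -/
noncomputable def laplacian2 (f : EuclideanSpace ℝ (Fin 2) → ℝ)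
    (x : EuclideanSpace ℝ (Fin 2)) : ℝ :=
  ∑ i : Fin 2,
    fderiv ℝ (fun y => fderiv ℝ f y (EuclideanSpace.single i 1)) x (EuclideanSpace.single i 1)

/-- The polynomial weight `r_{ℓ,θ}(x) = (1 + θ‖x‖²)^{−ℓ}` on `ℝ²`. -/
noncomputable def polyWeight (ℓ θ : ℝ) (x : EuclideanSpace ℝ (Fin 2)) : ℝ :=
  (1 + θ * ‖x‖ ^ 2) ^ (-ℓ)

local notation "E2" => EuclideanSpace ℝ (Fin 2)

private lemma upos (θ : ℝ) (hθ : 0 < θ) (x : E2) : 0 < 1 + θ * ‖x‖ ^ 2 := by positivity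

private lemma hU (θ : ℝ) (x : E2) :
    HasFDerivAt (fun y : E2 => 1 + θ * ‖y‖ ^ 2) ((2 * θ) • innerSL ℝ x) x := by
  have h := ((hasStrictFDerivAt_norm_sq x).hasFDerivAt.const_mul θ).const_add 1
  refine h.congr_fderiv ?_
  ext v
  simp [two_smul, mul_comm, mul_assoc, mul_left_comm]
  ring

private lemma hF (ℓ θ : ℝ) (hθ : 0 < θ) (x : E2) :
    HasFDerivAt (polyWeight ℓ θ)
      (((-2 * ℓ * θ) * (1 + θ * ‖x‖ ^ 2) ^ (-ℓ - 1)) • innerSL ℝ x) x := by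
  have hu := upos θ hθ x
  have h := (Real.hasDerivAt_rpow_const (p := -ℓ) (Or.inl hu.ne')).comp_hasFDerivAt x (hU θ x)
  refine h.congr_fderiv ?_
  rw [smul_smul]
  ring_nf

private lemma grad_eq (ℓ θ : ℝ) (hθ : 0 < θ) (x : E2) :
    gradient (polyWeight ℓ θ) x
      = ((-2 * ℓ * θ) * (1 + θ * ‖x‖ ^ 2) ^ (-ℓ - 1)) • x := by
  have h : HasGradientAt (polyWeight ℓ θ)
      (((-2 * ℓ * θ) * (1 + θ * ‖x‖ ^ 2) ^ (-ℓ - 1)) • x) x := by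
    rw [hasGradientAt_iff_hasFDerivAt]
    refine (hF ℓ θ hθ x).congr_fderiv ?_
    ext v
    simp [InnerProductSpace.toDual_apply_apply, real_inner_smul_left]
  exact h.gradient

private lemma fderiv_apply_single (ℓ θ : ℝ) (hθ : 0 < θ) (y : E2) (i : Fin 2) :
    fderiv ℝ (polyWeight ℓ θ) y (EuclideanSpace.single i 1)
      = ((-2 * ℓ * θ) * (1 + θ * ‖y‖ ^ 2) ^ (-ℓ - 1)) * y i := by
  rw [(hF ℓ θ hθ y).fderiv]
  simp only [ContinuousLinearMap.coe_smul', Pi.smul_apply, innerSL_apply_apply, smul_eq_mul]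
  congr 1
  simpa using EuclideanSpace.inner_single_right (𝕜 := ℝ) i 1 y

private lemma hC (ℓ θ : ℝ) (hθ : 0 < θ) (x : E2) :
    HasFDerivAt (fun y : E2 => (-2 * ℓ * θ) * (1 + θ * ‖y‖ ^ 2) ^ (-ℓ - 1))
      (((4 * ℓ * (ℓ + 1) * θ ^ 2) * (1 + θ * ‖x‖ ^ 2) ^ (-ℓ - 2)) • innerSL ℝ x) x := by
  have hu := upos θ hθ x
  have h := ((Real.hasDerivAt_rpow_const (p := -ℓ - 1)
      (Or.inl hu.ne')).comp_hasFDerivAt x (hU θ x)).const_mul (-2 * ℓ * θ)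
  refine h.congr_fderiv ?_
  rw [smul_smul, smul_smul]
  congr 1
  have : -ℓ - 1 - 1 = -ℓ - 2 := by ring
  rw [this]
  ring

private lemma second_deriv (ℓ θ : ℝ) (hθ : 0 < θ) (x : E2) (i : Fin 2) :
    fderiv ℝ (fun y => fderiv ℝ (polyWeight ℓ θ) y (EuclideanSpace.single i 1)) x
        (EuclideanSpace.single i 1)
      = (4 * ℓ * (ℓ + 1) * θ ^ 2) * (1 + θ * ‖x‖ ^ 2) ^ (-ℓ - 2) * (x i) ^ 2
        + (-2 * ℓ * θ) * (1 + θ * ‖x‖ ^ 2) ^ (-ℓ - 1) := by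
  have hfun : (fun y => fderiv ℝ (polyWeight ℓ θ) y (EuclideanSpace.single i 1))
      = fun y : E2 => ((-2 * ℓ * θ) * (1 + θ * ‖y‖ ^ 2) ^ (-ℓ - 1)) * y i :=
    funext fun y => fderiv_apply_single ℓ θ hθ y i
  rw [hfun]
  have hproj : HasFDerivAt (fun y : E2 => y i) (EuclideanSpace.proj (𝕜 := ℝ) i) x :=
    (EuclideanSpace.proj (𝕜 := ℝ) i).hasFDerivAt
  have h : HasFDerivAt (fun y : E2 => ((-2 * ℓ * θ) * (1 + θ * ‖y‖ ^ 2) ^ (-ℓ - 1)) * y i) _ x :=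
    (hC ℓ θ hθ x).mul hproj
  rw [h.fderiv]
  simp only [ContinuousLinearMap.add_apply, ContinuousLinearMap.coe_smul', Pi.smul_apply,
    smul_eq_mul, innerSL_apply_apply]
  have h1 : EuclideanSpace.proj (𝕜 := ℝ) i (EuclideanSpace.single i 1) = 1 := by
    simp [EuclideanSpace.single_apply]
  have h2 : (inner ℝ x (EuclideanSpace.single i (1:ℝ)) : ℝ) = x i := by
    simp [EuclideanSpace.inner_single_right]
  rw [h1, h2]
  ring

private lemma norm_sq_sum (x : E2) : ∑ i : Fin 2, (x i) ^ 2 = ‖x‖ ^ 2 := by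
  rw [EuclideanSpace.norm_eq, Real.sq_sqrt (by positivity)]
  simp [Real.norm_eq_abs, sq_abs]

private lemma lap_eq (ℓ θ : ℝ) (hθ : 0 < θ) (x : E2) :
    laplacian2 (polyWeight ℓ θ) x
      = (4 * ℓ * (ℓ + 1) * θ ^ 2) * (1 + θ * ‖x‖ ^ 2) ^ (-ℓ - 2) * ‖x‖ ^ 2
        + 2 * ((-2 * ℓ * θ) * (1 + θ * ‖x‖ ^ 2) ^ (-ℓ - 1)) := by
  unfold laplacian2
  rw [Finset.sum_congr rfl (fun i _ => second_deriv ℓ θ hθ x i)]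
  rw [Finset.sum_add_distrib, ← Finset.mul_sum, norm_sq_sum]
  simp only [Finset.sum_const, Finset.card_univ, Fintype.card_fin, nsmul_eq_mul]
  push_cast
  ring

private lemma arith_core (ℓ m θ s : ℝ) (hm : 0 < m) (hθ : 0 < θ) (hs : 0 ≤ s)
    (hkey : 2 * θ * (|ℓ| + 1) ^ 2 ≤ m ^ 2) :
    |(-4 * ℓ * θ - 4 * ℓ ^ 2 * θ ^ 2 * s)| < 2 * m ^ 2 * (1 + θ * s) ^ 2 := by
  have hL1 : ℓ ≤ |ℓ| := le_abs_self ℓ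
  have hL2 : -|ℓ| ≤ ℓ := neg_abs_le ℓ
  have hL0 : 0 ≤ |ℓ| := abs_nonneg ℓ
  have hsq : ℓ ^ 2 = |ℓ| ^ 2 := (sq_abs ℓ).symm
  rw [abs_lt]
  constructor
  · nlinarith [mul_nonneg (mul_nonneg hθ.le hθ.le) hs, mul_nonneg hθ.le hs,
      sq_nonneg (θ * s), mul_pos hθ (mul_pos hm hm),
      mul_nonneg (mul_nonneg hL0 (mul_nonneg hθ.le hθ.le)) hs,
      mul_nonneg (mul_nonneg (mul_nonneg hL0 hL0) (mul_nonneg hθ.le hθ.le)) hs]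
  · nlinarith [mul_nonneg (mul_nonneg hθ.le hθ.le) hs, mul_nonneg hθ.le hs,
      sq_nonneg (θ * s), mul_pos hθ (mul_pos hm hm),
      mul_nonneg (mul_nonneg hL0 (mul_nonneg hθ.le hθ.le)) hs,
      mul_nonneg (mul_nonneg (mul_nonneg hL0 hL0) (mul_nonneg hθ.le hθ.le)) hs]

/-- For every `ℓ ∈ ℝ` and `m > 0` there is `θ₀ > 0` such that for all `0 < θ ≤ θ₀` the
polynomial weight satisfies `|r_{ℓ,θ} Δr_{ℓ,θ} − 2‖∇r_{ℓ,θ}‖²| < 2m² r_{ℓ,θ}²` everywhere. -/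
theorem polyWeight_laplacian_bound (ℓ m : ℝ) (hm : 0 < m) :
    ∃ θ₀ : ℝ, 0 < θ₀ ∧
      ∀ θ : ℝ, 0 < θ → θ ≤ θ₀ →
      ∀ x : EuclideanSpace ℝ (Fin 2),
        |polyWeight ℓ θ x * laplacian2 (polyWeight ℓ θ) x -
            2 * ‖gradient (polyWeight ℓ θ) x‖ ^ 2| <
          2 * m ^ 2 * polyWeight ℓ θ x ^ 2 := by
  refine ⟨m ^ 2 / (2 * (|ℓ| + 1) ^ 2), by positivity, fun θ hθ hθ₀ x => ?_⟩
  have hkey : 2 * θ * (|ℓ| + 1) ^ 2 ≤ m ^ 2 := by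
    rw [le_div_iff₀ (by positivity)] at hθ₀
    nlinarith
  set s : ℝ := ‖x‖ ^ 2 with hs_def
  have hs : 0 ≤ s := by positivity
  set u : ℝ := 1 + θ * s with hu_def
  have hu : 0 < u := by positivity
  set B : ℝ := u ^ (-2 * ℓ - 2) with hB_def
  have hB : 0 < B := Real.rpow_pos_of_pos hu _
  have e1 : u ^ (-ℓ) * u ^ (-ℓ - 2) = B := by
    rw [← Real.rpow_add hu, hB_def]; ring_nf
  have e2 : u ^ (-ℓ) * u ^ (-ℓ - 1) = u * B := by
    rw [← Real.rpow_add hu, hB_def]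
    nth_rewrite 2 [show u = u ^ (1:ℝ) from (Real.rpow_one u).symm]
    rw [← Real.rpow_add hu]; ring_nf
  have e3 : u ^ (-ℓ - 1) * u ^ (-ℓ - 1) = B := by
    rw [← Real.rpow_add hu, hB_def]; ring_nf
  have e4 : u ^ (-ℓ) * u ^ (-ℓ) = u ^ 2 * B := by
    have h2 : u ^ 2 * B = u ^ ((2:ℝ) + (-2 * ℓ - 2)) := by
      rw [hB_def, ← Real.rpow_natCast u 2, ← Real.rpow_add hu]
      norm_num
    rw [← Real.rpow_add hu, h2]
    congr 1
    ring
  have hgrad : ‖gradient (polyWeight ℓ θ) x‖ ^ 2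
      = ((-2 * ℓ * θ) * u ^ (-ℓ - 1)) ^ 2 * s := by
    rw [grad_eq ℓ θ hθ x, norm_smul, mul_pow, Real.norm_eq_abs, sq_abs]
  have hlap := lap_eq ℓ θ hθ x
  have hpw : polyWeight ℓ θ x = u ^ (-ℓ) := rfl
  rw [hgrad, hlap, hpw]
  have hLHS : u ^ (-ℓ) * ((4 * ℓ * (ℓ + 1) * θ ^ 2) * u ^ (-ℓ - 2) * s
        + 2 * ((-2 * ℓ * θ) * u ^ (-ℓ - 1)))
      - 2 * (((-2 * ℓ * θ) * u ^ (-ℓ - 1)) ^ 2 * s)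
      = B * (-4 * ℓ * θ - 4 * ℓ ^ 2 * θ ^ 2 * s) := by
    have exp : u ^ (-ℓ) * ((4 * ℓ * (ℓ + 1) * θ ^ 2) * u ^ (-ℓ - 2) * s
          + 2 * ((-2 * ℓ * θ) * u ^ (-ℓ - 1)))
        - 2 * (((-2 * ℓ * θ) * u ^ (-ℓ - 1)) ^ 2 * s)
        = (4 * ℓ * (ℓ + 1) * θ ^ 2 * s) * (u ^ (-ℓ) * u ^ (-ℓ - 2))
          + (-4 * ℓ * θ) * (u ^ (-ℓ) * u ^ (-ℓ - 1))
          - (8 * ℓ ^ 2 * θ ^ 2 * s) * (u ^ (-ℓ - 1) * u ^ (-ℓ - 1)) := by ring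
    rw [exp, e1, e2, e3, hu_def]
    ring
  have hRHS : 2 * m ^ 2 * (u ^ (-ℓ)) ^ 2 = 2 * m ^ 2 * u ^ 2 * B := by
    rw [show (u ^ (-ℓ)) ^ 2 = u ^ (-ℓ) * u ^ (-ℓ) from sq (u ^ (-ℓ)), e4]; ring
  rw [hLHS, hRHS, abs_mul, abs_of_pos hB]
  rw [show 2 * m ^ 2 * u ^ 2 * B = B * (2 * m ^ 2 * u ^ 2) by ring]
  exact mul_lt_mul_of_pos_left (arith_core ℓ m θ s hm hθ hs hkey) hB
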